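/- arXiv:1612.04980 — 2 statements merged into one kernel-verified Lean document; each statement's English description precedes it below -/
import Mathlib

section
/- For n ≥ 2, let F = D_n[V(D_n) ∖ {b_1}] be the induced subdigraph of D_n on the reachable fragment V(D_n) ∖ {b_1}. Then ddp(F − a_1) = n − 1, while for every vertex v of F with v ≠ a_1 one has ddp(F − v) ≥ n. (Hence a_1 is the unique vertex whose removal from F decreases the DAG-depth, i.e., the only optimal first cop placement in F.) -/
open scoped Classical

noncomputable section

/-- A finite directed graph: a finite vertex set together with an adjacency
relation whose edges join vertices of the graph. -/
structure FinDigraph (α : Type) where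
  verts : Finset α
  Adj : α → α → Prop
  adj_mem : ∀ u v, Adj u v → u ∈ verts ∧ v ∈ verts

namespace FinDigraph

variable {α β : Type}

/-- The out-neighbourhood `N⁺_D(v)`. -/
def outNbhd (D : FinDigraph α) (v : α) : Set α := {u | D.Adj v u}

/-- The set of vertices reachable from `s` by a (possibly trivial) directed path. -/
def reachSet (D : FinDigraph α) (s : α) : Finset α :=
  D.verts.filter fun v => Relation.ReflTransGen D.Adj s v

/-- A reachable fragment: an inclusion-maximal set among the reachable sets. -/
def IsFragment (D : FinDigraph α) (R : Finset α) : Prop :=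
  (∃ s ∈ D.verts, R = D.reachSet s) ∧
  ∀ s ∈ D.verts, R ⊆ D.reachSet s → R = D.reachSet s

/-- The collection of all reachable fragments of `D`. -/
def fragments (D : FinDigraph α) : Finset (Finset α) :=
  D.verts.powerset.filter fun R => D.IsFragment R

/-- The induced subdigraph `D[S]`. -/
def induce (D : FinDigraph α) (S : Finset α) : FinDigraph α where
  verts := D.verts ∩ S
  Adj u v := D.Adj u v ∧ u ∈ S ∧ v ∈ S
  adj_mem := fun u v h => ⟨Finset.mem_inter.mpr ⟨(D.adj_mem u v h.1).1, h.2.1⟩,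
    Finset.mem_inter.mpr ⟨(D.adj_mem u v h.1).2, h.2.2⟩⟩

/-- Deletion of a vertex: `D − v = D[V(D) ∖ {v}]`. -/
def deleteVert (D : FinDigraph α) (v : α) : FinDigraph α :=
  D.induce (D.verts.erase v)

/-- Fuel-based helper for DAG-depth; the fuel `|V(D)|` always suffices since each
recursive call strictly decreases the number of vertices. -/
def ddpAux : ℕ → FinDigraph α → ℕ
  | 0, _ => 0
  | n+1, D =>
    if hcard : D.verts.card ≤ 1 then 1
    else if D.fragments.card = 1 then
      1 + D.verts.inf' (Finset.card_pos.mp (by omega)) fun v => ddpAux n (D.deleteVert v)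
    else
      D.fragments.sup fun R => ddpAux n (D.induce R)

/-- The DAG-depth of a digraph. -/
def ddp (D : FinDigraph α) : ℕ := ddpAux D.verts.card D

/-- A DAG: a (finite) digraph with no directed cycles. -/
def IsDag (P : FinDigraph α) : Prop := ∀ v, ¬ Relation.TransGen P.Adj v v

/-- A root of a DAG: a vertex of indegree zero. -/
def IsRoot (P : FinDigraph α) (r : α) : Prop := r ∈ P.verts ∧ ∀ u, ¬ P.Adj u r

/-- `y` is a descendant of `x`: there is a (possibly trivial) directed path from `x` to `y`. -/
def Desc (P : FinDigraph α) (x y : α) : Prop := Relation.ReflTransGen P.Adj x y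

/-- `l` is a directed path in `P` starting at a root of `P` and ending at `v`. -/
def IsRootPath (P : FinDigraph α) (l : List α) (v : α) : Prop :=
  l ≠ [] ∧ l.Chain' P.Adj ∧ (∀ x ∈ l, x ∈ P.verts) ∧
  (∃ r, l.head? = some r ∧ P.IsRoot r) ∧ l.getLast? = some v

/-- The depth of a DAG: the maximum number of vertices on a directed path. -/
def depth (P : FinDigraph α) : ℕ :=
  sSup {n : ℕ | ∃ l : List α, l.Chain' P.Adj ∧ (∀ x ∈ l, x ∈ P.verts) ∧ l.length = n}

/-- The Neighbor cover condition for a DAG-depth decomposition `(P, org)` of `D`. -/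
def NeighborCover (D : FinDigraph α) (P : FinDigraph β) (org : β → α) : Prop :=
  ∀ v' ∈ P.verts, ∀ u, D.Adj (org v') u →
    (∃ u' ∈ P.verts, org u' = u ∧ P.Desc v' u') ∨
    (∀ l, P.IsRootPath l v' → ∃ u' ∈ l, org u' = u)

/-- `(P, org)` is a valid DAG-depth decomposition of `D`: `P` is a DAG, `org` maps
`V(P)` onto `V(D)`, and the Neighbor cover condition holds. -/
def IsValidDecomp (D : FinDigraph α) (P : FinDigraph β) (org : β → α) : Prop :=
  P.IsDag ∧ (∀ v' ∈ P.verts, org v' ∈ D.verts) ∧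
  (∀ v ∈ D.verts, ∃ v' ∈ P.verts, org v' = v) ∧
  NeighborCover D P org

end FinDigraph

namespace FinDigraph

/-- The digraph `Dn n` with vertices `a_1, …, a_n, b_1, …, b_n`, where `a_i = (i, false)`
and `b_i = (i, true)`, and edges `(x_i, y_j)` for all `1 ≤ i < j ≤ n` and all choices
`x, y ∈ {a, b}`. -/
def Dn (n : ℕ) : FinDigraph (ℕ × Bool) where
  verts := Finset.Icc 1 n ×ˢ Finset.univ
  Adj u v := 1 ≤ u.1 ∧ u.1 < v.1 ∧ v.1 ≤ n
  adj_mem := by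
    intro u v h
    simp only [Finset.mem_product, Finset.mem_Icc, Finset.mem_univ, and_true]
    omega

end FinDigraph

namespace FinDigraph

/-- A layered digraph on `ℕ × Bool`: edges exactly between vertices with
increasing first coordinate. -/
def Layered (D : FinDigraph (ℕ × Bool)) : Prop :=
  ∀ u v, D.Adj u v ↔ u ∈ D.verts ∧ v ∈ D.verts ∧ u.1 < v.1

lemma mem_induce_verts (D : FinDigraph (ℕ × Bool)) (S : Finset (ℕ × Bool)) (x : ℕ × Bool) :
    x ∈ (D.induce S).verts ↔ x ∈ D.verts ∧ x ∈ S := by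
  simp only [FinDigraph.induce, Finset.mem_inter]

lemma induce_verts_of_subset {D : FinDigraph (ℕ × Bool)} {S : Finset (ℕ × Bool)}
    (h : S ⊆ D.verts) : (D.induce S).verts = S := by
  ext x
  rw [mem_induce_verts]
  exact ⟨fun h' => h'.2, fun h' => ⟨h h', h'⟩⟩

lemma induce_adj' (D : FinDigraph (ℕ × Bool)) (S : Finset (ℕ × Bool)) (u v : ℕ × Bool) :
    (D.induce S).Adj u v ↔ D.Adj u v ∧ u ∈ S ∧ v ∈ S := Iff.rfl

lemma Layered.induce {D : FinDigraph (ℕ × Bool)} (h : D.Layered) (S : Finset (ℕ × Bool)) :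
    (D.induce S).Layered := by
  intro u v
  rw [induce_adj', h u v]
  simp only [mem_induce_verts]
  tauto

lemma Layered.deleteVert {D : FinDigraph (ℕ × Bool)} (h : D.Layered) (v : ℕ × Bool) :
    (D.deleteVert v).Layered := h.induce _

lemma deleteVert_verts (D : FinDigraph (ℕ × Bool)) (v : ℕ × Bool) :
    (D.deleteVert v).verts = D.verts.erase v := by
  ext x
  simp only [FinDigraph.deleteVert, mem_induce_verts, Finset.mem_erase]
  tauto

lemma Layered.rtg_iff {D : FinDigraph (ℕ × Bool)} (hl : D.Layered) {s v : ℕ × Bool}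
    (hs : s ∈ D.verts) :
    Relation.ReflTransGen D.Adj s v ↔ v = s ∨ (v ∈ D.verts ∧ s.1 < v.1) := by
  constructor
  · intro h
    induction h with
    | refl => exact Or.inl rfl
    | tail _ hbc ih =>
      obtain ⟨hb, hc, hlt⟩ := (hl _ _).mp hbc
      rcases ih with rfl | ⟨_, hlt'⟩
      · exact Or.inr ⟨hc, hlt⟩
      · exact Or.inr ⟨hc, lt_trans hlt' hlt⟩
  · rintro (rfl | ⟨hv, hlt⟩)
    · exact Relation.ReflTransGen.refl
    · exact Relation.ReflTransGen.single ((hl s v).mpr ⟨hs, hv, hlt⟩)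

lemma Layered.mem_reachSet {D : FinDigraph (ℕ × Bool)} (hl : D.Layered) {s : ℕ × Bool}
    (hs : s ∈ D.verts) (v : ℕ × Bool) :
    v ∈ D.reachSet s ↔ v ∈ D.verts ∧ (v = s ∨ s.1 < v.1) := by
  rw [reachSet, Finset.mem_filter, hl.rtg_iff hs]
  tauto

lemma Layered.isFragment_iff {D : FinDigraph (ℕ × Bool)} (hl : D.Layered)
    (hne : D.verts.Nonempty) (R : Finset (ℕ × Bool)) :
    D.IsFragment R ↔ ∃ s ∈ D.verts, (∀ t ∈ D.verts, s.1 ≤ t.1) ∧ R = D.reachSet s := by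
  obtain ⟨t₀, ht₀, hmin⟩ := D.verts.exists_min_image Prod.fst hne
  constructor
  · rintro ⟨⟨s, hs, rfl⟩, hmax⟩
    rcases le_or_gt s.1 t₀.1 with h | h
    · exact ⟨s, hs, fun t ht => le_trans h (hmin t ht), rfl⟩
    · have hsub : D.reachSet s ⊆ D.reachSet t₀ := by
        intro v hv
        rw [hl.mem_reachSet hs] at hv
        rw [hl.mem_reachSet ht₀]
        rcases hv.2 with rfl | hlt
        · exact ⟨hv.1, Or.inr h⟩
        · exact ⟨hv.1, Or.inr (lt_trans h hlt)⟩
      exact ⟨t₀, ht₀, hmin, hmax t₀ ht₀ hsub⟩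
  · rintro ⟨s, hs, hsmin, rfl⟩
    refine ⟨⟨s, hs, rfl⟩, fun t ht hsub => ?_⟩
    have hst : s ∈ D.reachSet t := hsub ((hl.mem_reachSet hs s).mpr ⟨hs, Or.inl rfl⟩)
    rw [hl.mem_reachSet ht] at hst
    rcases hst.2 with rfl | hlt
    · rfl
    · exact absurd (hsmin t ht) (not_le.mpr hlt)

lemma mem_fragments {D : FinDigraph (ℕ × Bool)} (R : Finset (ℕ × Bool)) :
    R ∈ D.fragments ↔ D.IsFragment R := by
  rw [fragments, Finset.mem_filter, Finset.mem_powerset]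
  refine ⟨fun h => h.2, fun h => ⟨?_, h⟩⟩
  obtain ⟨⟨s, _, rfl⟩, -⟩ := h
  exact Finset.filter_subset _ _

lemma ddpAux_layered (fuel : ℕ) : ∀ (D : FinDigraph (ℕ × Bool)), D.Layered →
    D.verts.Nonempty → D.verts.card ≤ fuel →
    ddpAux fuel D = (D.verts.image Prod.fst).card := by
  induction fuel with
  | zero =>
    intro D _ hne hc
    exact absurd (Finset.card_pos.mpr hne) (by omega)
  | succ f ih =>
    intro D hl hne hc
    by_cases h1 : D.verts.card ≤ 1
    · have hcard1 : D.verts.card = 1 := le_antisymm h1 (Finset.card_pos.mpr hne)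
      obtain ⟨v, hv⟩ := Finset.card_eq_one.mp hcard1
      rw [ddpAux, dif_pos h1, hv, Finset.image_singleton, Finset.card_singleton]
    · obtain ⟨s₀, hs₀, hmin⟩ := D.verts.exists_min_image Prod.fst hne
      have hmL : s₀.1 ∈ D.verts.image Prod.fst := Finset.mem_image_of_mem _ hs₀
      have hMfrag : D.fragments = (D.verts.filter fun v => v.1 = s₀.1).image D.reachSet := by
        ext R
        rw [mem_fragments, hl.isFragment_iff hne, Finset.mem_image]
        constructor
        · rintro ⟨s, hs, hsm, rfl⟩
          exact ⟨s, Finset.mem_filter.mpr ⟨hs, le_antisymm (hsm s₀ hs₀) (hmin s hs)⟩, rfl⟩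
        · rintro ⟨s, hs, rfl⟩
          obtain ⟨hs', hseq⟩ := Finset.mem_filter.mp hs
          exact ⟨s, hs', fun t ht => hseq ▸ hmin t ht, rfl⟩
      have hinj : Set.InjOn D.reachSet ↑(D.verts.filter fun v => v.1 = s₀.1) := by
        intro s hs t ht heq
        rw [Finset.mem_coe, Finset.mem_filter] at hs ht
        have hst : s ∈ D.reachSet t := by
          rw [← heq, hl.mem_reachSet hs.1]
          exact ⟨hs.1, Or.inl rfl⟩
        rw [hl.mem_reachSet ht.1] at hst
        rcases hst.2 with h | h
        · exact h
        · exfalso; rw [hs.2, ht.2] at h; exact lt_irrefl _ h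
      have hfcard : D.fragments.card = (D.verts.filter fun v => v.1 = s₀.1).card := by
        rw [hMfrag, Finset.card_image_of_injOn hinj]
      have hdelkey : ∀ v ∈ D.verts,
          ddpAux f (D.deleteVert v) = ((D.verts.erase v).image Prod.fst).card := by
        intro v hv
        rw [← deleteVert_verts D v]
        apply ih _ (hl.deleteVert v)
        · rw [deleteVert_verts, ← Finset.card_pos, Finset.card_erase_of_mem hv]; omega
        · rw [deleteVert_verts, Finset.card_erase_of_mem hv]; omega
      by_cases h2 : D.fragments.card = 1
      · rw [ddpAux, dif_neg h1, if_pos h2]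
        have hM1 : D.verts.filter (fun v => v.1 = s₀.1) = {s₀} := by
          have hcard : (D.verts.filter fun v => v.1 = s₀.1).card = 1 := by rw [← hfcard]; exact h2
          obtain ⟨x, hx⟩ := Finset.card_eq_one.mp hcard
          have hsM : s₀ ∈ D.verts.filter fun v => v.1 = s₀.1 := Finset.mem_filter.mpr ⟨hs₀, rfl⟩
          rw [hx] at hsM ⊢
          rw [Finset.mem_singleton.mp hsM]
        have himg : (D.verts.erase s₀).image Prod.fst = (D.verts.image Prod.fst).erase s₀.1 := by
          ext ℓ
          simp only [Finset.mem_image, Finset.mem_erase]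
          constructor
          · rintro ⟨w, ⟨hws, hwv⟩, rfl⟩
            refine ⟨?_, w, hwv, rfl⟩
            intro hws1
            have hwM : w ∈ D.verts.filter fun v => v.1 = s₀.1 := Finset.mem_filter.mpr ⟨hwv, hws1⟩
            rw [hM1, Finset.mem_singleton] at hwM
            exact hws hwM
          · rintro ⟨hℓ, w, hwv, rfl⟩
            exact ⟨w, ⟨fun h => hℓ (congrArg Prod.fst h), hwv⟩, rfl⟩
        have hinf : ∀ hne' : D.verts.Nonempty,
            (D.verts.inf' hne' fun v => ddpAux f (D.deleteVert v))
              = (D.verts.image Prod.fst).card - 1 := by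
          intro hne'
          apply le_antisymm
          · calc (D.verts.inf' hne' fun v => ddpAux f (D.deleteVert v))
                ≤ ddpAux f (D.deleteVert s₀) := Finset.inf'_le _ hs₀
              _ = _ := by rw [hdelkey s₀ hs₀, himg, Finset.card_erase_of_mem hmL]
          · apply Finset.le_inf'
            intro v hv
            rw [hdelkey v hv]
            have hsub : D.verts.image Prod.fst ⊆ insert v.1 ((D.verts.erase v).image Prod.fst) := by
              intro ℓ hℓ
              obtain ⟨w, hw, rfl⟩ := Finset.mem_image.mp hℓ
              by_cases hwv : w = v
              · subst hwv; exact Finset.mem_insert_self _ _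
              · exact Finset.mem_insert_of_mem
                  (Finset.mem_image_of_mem _ (Finset.mem_erase.mpr ⟨hwv, hw⟩))
            have h3 := Finset.card_le_card hsub
            have h4 := Finset.card_insert_le v.1 ((D.verts.erase v).image Prod.fst)
            omega
        rw [hinf _]
        have hpos : 0 < (D.verts.image Prod.fst).card := Finset.card_pos.mpr ⟨s₀.1, hmL⟩
        omega
      · rw [ddpAux, dif_neg h1, if_neg h2]
        have hs₀frag : D.reachSet s₀ ∈ D.fragments := by
          rw [mem_fragments, hl.isFragment_iff hne]
          exact ⟨s₀, hs₀, hmin, rfl⟩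
        have hM2 : 1 < (D.verts.filter fun v => v.1 = s₀.1).card := by
          rw [← hfcard]
          have h0 : 0 < D.fragments.card := Finset.card_pos.mpr ⟨_, hs₀frag⟩
          omega
        have hval : ∀ R ∈ D.fragments,
            ddpAux f (D.induce R) = (D.verts.image Prod.fst).card := by
          intro R hR
          rw [hMfrag, Finset.mem_image] at hR
          obtain ⟨s, hsM, rfl⟩ := hR
          obtain ⟨hs, hseq⟩ := Finset.mem_filter.mp hsM
          obtain ⟨t, htM, hts⟩ := Finset.exists_mem_ne hM2 s
          obtain ⟨ht, hteq⟩ := Finset.mem_filter.mp htM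
          have htR : t ∉ D.reachSet s := by
            rw [hl.mem_reachSet hs]
            rintro ⟨-, rfl | hlt⟩
            · exact hts rfl
            · rw [hseq, hteq] at hlt; exact lt_irrefl _ hlt
          have hRsub : D.reachSet s ⊆ D.verts := Finset.filter_subset _ _
          have hRverts : (D.induce (D.reachSet s)).verts = D.reachSet s := by
            rw [induce_verts_of_subset hRsub]
          have hsR : s ∈ D.reachSet s := (hl.mem_reachSet hs s).mpr ⟨hs, Or.inl rfl⟩
          have hcardR : (D.reachSet s).card ≤ f := by
            have hsub : D.reachSet s ⊆ D.verts.erase t := Finset.subset_erase.mpr ⟨hRsub, htR⟩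
            have h5 := Finset.card_le_card hsub
            rw [Finset.card_erase_of_mem ht] at h5
            omega
          rw [ih _ (hl.induce _) (by rw [hRverts]; exact ⟨s, hsR⟩) (by rw [hRverts]; exact hcardR),
            hRverts]
          congr 1
          apply Finset.Subset.antisymm
          · exact Finset.image_subset_image hRsub
          · intro ℓ hℓ
            obtain ⟨w, hw, rfl⟩ := Finset.mem_image.mp hℓ
            rcases eq_or_lt_of_le (hseq ▸ hmin w hw : s.1 ≤ w.1) with heq | hlt
            · exact heq ▸ Finset.mem_image_of_mem _ hsR
            · exact Finset.mem_image_of_mem _ ((hl.mem_reachSet hs w).mpr ⟨hw, Or.inr hlt⟩)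
        apply le_antisymm
        · exact Finset.sup_le fun R hR => le_of_eq (hval R hR)
        · have h6 := Finset.le_sup (f := fun R => ddpAux f (D.induce R)) hs₀frag
          exact le_trans (le_of_eq (hval _ hs₀frag).symm) h6

lemma ddp_layered (D : FinDigraph (ℕ × Bool)) (hl : D.Layered) (hne : D.verts.Nonempty) :
    ddp D = (D.verts.image Prod.fst).card :=
  ddpAux_layered _ D hl hne le_rfl

lemma Dn_layered (n : ℕ) : (Dn n).Layered := by
  intro u v
  show (1 ≤ u.1 ∧ u.1 < v.1 ∧ v.1 ≤ n) ↔ _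
  show _ ↔ u ∈ Finset.Icc 1 n ×ˢ Finset.univ ∧ v ∈ Finset.Icc 1 n ×ˢ Finset.univ ∧ u.1 < v.1
  simp only [Finset.mem_product, Finset.mem_Icc, Finset.mem_univ, and_true]
  omega

end FinDigraph


open FinDigraph in
/-- For `n ≥ 2`, let `F = Dn n [V(Dn n) ∖ {b_1}]` be the induced subdigraph of `Dn n`
on the reachable fragment `V(Dn n) ∖ {b_1}` (where `a_1 = (1, false)`,
`b_1 = (1, true)`).  Then `ddp (F − a_1) = n − 1`, while `ddp (F − v) ≥ n` for every
vertex `v ≠ a_1` of `F`; hence `a_1` is the only optimal first cop placement in `F`. -/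
theorem unique_optimal_first_move_Dn (n : ℕ) (hn : 2 ≤ n)
    (F : FinDigraph (ℕ × Bool)) (hF : F = (Dn n).induce ((Dn n).verts.erase (1, true))) :
    ddp (F.deleteVert (1, false)) = n - 1 ∧
    ∀ v ∈ F.verts, v ≠ (1, false) → n ≤ ddp (F.deleteVert v) := by
  subst hF
  have hDnV : (Dn n).verts = Finset.Icc 1 n ×ˢ Finset.univ := rfl
  have hFL : ((Dn n).induce ((Dn n).verts.erase (1, true))).Layered :=
    (Dn_layered n).induce _
  have hFV : ((Dn n).induce ((Dn n).verts.erase (1, true))).verts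
      = (Dn n).verts.erase (1, true) := by
    exact induce_verts_of_subset (Finset.erase_subset _ _)
  constructor
  · -- ddp of F - a₁ is n - 1
    have hGL := hFL.deleteVert ((1 : ℕ), false)
    have hGV : (((Dn n).induce ((Dn n).verts.erase (1, true))).deleteVert (1, false)).verts
        = ((Dn n).verts.erase (1, true)).erase (1, false) := by
      rw [deleteVert_verts, hFV]
    have hmem2 : ((2 : ℕ), false) ∈ ((Dn n).verts.erase (1, true)).erase (1, false) := by
      simp only [hDnV, Finset.mem_erase, Finset.mem_product, Finset.mem_Icc, Finset.mem_univ,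
        and_true, ne_eq, Prod.mk.injEq]
      refine ⟨by omega, by omega, by omega, by omega⟩
    have himg : ((((Dn n).verts.erase (1, true)).erase (1, false)).image Prod.fst)
        = Finset.Icc 2 n := by
      ext ℓ
      simp only [Finset.mem_image, hDnV, Finset.mem_erase, Finset.mem_product, Finset.mem_Icc,
        Finset.mem_univ, and_true, ne_eq, Prod.mk.injEq]
      constructor
      · rintro ⟨⟨x, b⟩, ⟨hb1, hb2, hx1, hx2⟩, rfl⟩
        refine ⟨?_, hx2⟩
        rcases Nat.lt_or_ge x 2 with h | h
        · exfalso
          have hx : x = 1 := by omega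
          subst hx
          cases b
          · exact hb1 rfl
          · exact hb2 rfl
        · exact h
      · rintro ⟨h2, hnle⟩
        refine ⟨(ℓ, false), ⟨?_, ?_, by omega, hnle⟩, rfl⟩
        · intro h; injection h with hA hB; omega
        · intro h; injection h with hA hB; exact Bool.noConfusion hB
    rw [ddp_layered _ hGL (by rw [hGV]; exact ⟨_, hmem2⟩), hGV, himg, Nat.card_Icc]
    omega
  · intro v hv hv1
    rw [hFV] at hv
    have hv2 : v ≠ ((1 : ℕ), true) := (Finset.mem_erase.mp hv).1
    have hvV : v ∈ (Dn n).verts := (Finset.mem_erase.mp hv).2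
    have hvfst : 2 ≤ v.1 := by
      obtain ⟨x, b⟩ := v
      simp only [hDnV, Finset.mem_product, Finset.mem_Icc, Finset.mem_univ, and_true] at hvV
      rcases Nat.lt_or_ge x 2 with h | h
      · exfalso
        have hx : x = 1 := by omega
        subst hx
        cases b
        · exact hv1 rfl
        · exact hv2 rfl
      · exact h
    have hGL := hFL.deleteVert v
    have hGV : (((Dn n).induce ((Dn n).verts.erase (1, true))).deleteVert v).verts
        = ((Dn n).verts.erase (1, true)).erase v := by
      rw [deleteVert_verts, hFV]
    have hsub : Finset.Icc 1 n ⊆ ((((Dn n).verts.erase (1, true)).erase v).image Prod.fst) := by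
      intro ℓ hℓ
      rw [Finset.mem_Icc] at hℓ
      by_cases hℓ1 : ℓ = 1
      · subst hℓ1
        refine Finset.mem_image.mpr ⟨(1, false), ?_, rfl⟩
        simp only [hDnV, Finset.mem_erase, Finset.mem_product, Finset.mem_Icc, Finset.mem_univ,
          and_true, ne_eq]
        refine ⟨Ne.symm hv1, ?_, by omega, by omega⟩
        intro h; injection h with hA hB; exact Bool.noConfusion hB
      · by_cases hvb : v = (ℓ, false)
        · refine Finset.mem_image.mpr ⟨(ℓ, true), ?_, rfl⟩
          simp only [hDnV, Finset.mem_erase, Finset.mem_product, Finset.mem_Icc, Finset.mem_univ,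
            and_true, ne_eq, Prod.mk.injEq]
          refine ⟨?_, ?_, by omega, hℓ.2⟩
          · rw [hvb]; intro h; injection h with hA hB; exact Bool.noConfusion hB
          · intro h; exact hℓ1 h
        · refine Finset.mem_image.mpr ⟨(ℓ, false), ?_, rfl⟩
          simp only [hDnV, Finset.mem_erase, Finset.mem_product, Finset.mem_Icc, Finset.mem_univ,
            and_true, ne_eq, Prod.mk.injEq]
          refine ⟨fun h => hvb h.symm, ?_, by omega, hℓ.2⟩
          intro h; exact hℓ1 h.1
    have hGne : (((Dn n).induce ((Dn n).verts.erase (1, true))).deleteVert v).verts.Nonempty := by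
      rw [hGV]
      obtain ⟨w, hw, -⟩ := Finset.mem_image.mp (hsub (Finset.mem_Icc.mpr ⟨le_refl 1, by omega⟩))
      exact ⟨w, hw⟩
    rw [ddp_layered _ hGL hGne, hGV]
    calc n = (Finset.Icc 1 n).card := by rw [Nat.card_Icc]; omega
      _ ≤ _ := Finset.card_le_card hsub
end
end

section
/- Let H be the digraph with vertex set {A, B, C, D, E, F} (six distinct vertices) and edge set {(A,C), (B,C), (C,D), (D,C), (E,D), (F,D)}. Then ddp(H) = 2, yet every valid DAG-depth decomposition (P, org) of H in which org is injective has depth at least 3. (Hence an optimal DAG-depth decomposition cannot always avoid repeating vertices.) -/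
open scoped Classical

noncomputable section

namespace FinDigraph

/-- The digraph `H` with vertices `A = 0, B = 1, C = 2, D = 3, E = 4, F = 5` and
edges `(A,C), (B,C), (C,D), (D,C), (E,D), (F,D)`. -/
def exampleH : FinDigraph ℕ where
  verts := {0, 1, 2, 3, 4, 5}
  Adj u v := (u, v) ∈ ({(0, 2), (1, 2), (2, 3), (3, 2), (4, 3), (5, 3)} : Finset (ℕ × ℕ))
  adj_mem := by
    intro u v h
    fin_cases h <;> simp

end FinDigraph


namespace FinDigraph

/-! ### Computable mirror of `ddp` for digraphs on `ℕ` -/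

def cStep (E : Finset (ℕ × ℕ)) (V : Finset ℕ) (T : Finset ℕ) : Finset ℕ :=
  T ∪ V.filter (fun v => ∃ u ∈ T, (u, v) ∈ E)

def cReach (E : Finset (ℕ × ℕ)) (V : Finset ℕ) (s : ℕ) : Finset ℕ :=
  (cStep E V)^[V.card] {s}

lemma subset_cStep (E V T) : T ⊆ cStep E V T := Finset.subset_union_left

lemma cStep_subset (E) {V T : Finset ℕ} (h : T ⊆ V) : cStep E V T ⊆ V := by
  apply Finset.union_subset h (Finset.filter_subset _ _)

lemma iter_subset_V (E) {V T : Finset ℕ} (h : T ⊆ V) (n : ℕ) : (cStep E V)^[n] T ⊆ V := by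
  induction n with
  | zero => exact h
  | succ n ih => rw [Function.iterate_succ_apply']; exact cStep_subset E ih

lemma iter_mono (E V T) {m n : ℕ} (h : m ≤ n) : (cStep E V)^[m] T ⊆ (cStep E V)^[n] T := by
  induction n with
  | zero => simpa [Nat.le_zero.mp h]
  | succ n ih =>
    rcases Nat.lt_or_ge m (n+1) with h' | h'
    · rw [Function.iterate_succ_apply']
      exact (ih (Nat.lt_succ_iff.mp h')).trans (subset_cStep _ _ _)
    · have : m = n + 1 := le_antisymm h h'
      subst this; rfl

lemma iter_stab (E V T) {k : ℕ} (h : (cStep E V)^[k+1] T = (cStep E V)^[k] T) :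
    ∀ m, k ≤ m → (cStep E V)^[m] T = (cStep E V)^[k] T := by
  intro m hm
  induction m with
  | zero => simp [Nat.le_zero.mp hm]
  | succ m ih =>
    rcases Nat.lt_or_ge k (m+1) with h' | h'
    · have hkm := Nat.lt_succ_iff.mp h'
      rw [Function.iterate_succ_apply', ih hkm,
        ← Function.iterate_succ_apply' (cStep E V) k T, h]
    · have : k = m + 1 := le_antisymm hm h'
      simp [this]

lemma cReach_fixed (E : Finset (ℕ × ℕ)) {V : Finset ℕ} {s : ℕ} (hs : s ∈ V) :
    cStep E V (cReach E V s) = cReach E V s := by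
  -- there is a stabilization index k < V.card
  by_cases hex : ∃ k < V.card, (cStep E V)^[k+1] ({s} : Finset ℕ) = (cStep E V)^[k] {s}
  · obtain ⟨k, hk, hstab⟩ := hex
    have h1 := iter_stab E V {s} hstab V.card (le_of_lt hk)
    have h2 := iter_stab E V {s} hstab (V.card + 1) (le_of_lt (Nat.lt_succ_of_lt hk))
    unfold cReach
    rw [← Function.iterate_succ_apply' (cStep E V) V.card {s}, h2, h1]
  · exfalso
    push_neg at hex
    have grow : ∀ n, n ≤ V.card → n + 1 ≤ ((cStep E V)^[n] ({s} : Finset ℕ)).card := by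
      intro n
      induction n with
      | zero => intro _; simp
      | succ n ih =>
        intro hn
        have h1 : n + 1 ≤ ((cStep E V)^[n] ({s} : Finset ℕ)).card := ih (Nat.le_of_succ_le hn)
        have hne := hex n (Nat.lt_of_succ_le hn)
        have hss : (cStep E V)^[n] ({s} : Finset ℕ) ⊂ (cStep E V)^[n+1] {s} :=
          Finset.ssubset_iff_subset_ne.mpr ⟨iter_mono E V {s} (Nat.le_succ n), (Ne.symm hne)⟩
        have := Finset.card_lt_card hss
        omega
    have h1 := grow V.card le_rfl
    have h2 := Finset.card_le_card (iter_subset_V E (Finset.singleton_subset_iff.mpr hs) V.card)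
    omega

lemma cReach_spec (D : FinDigraph ℕ) (E : Finset (ℕ × ℕ))
    (hE : ∀ u v, D.Adj u v ↔ (u, v) ∈ E) {s : ℕ} (hs : s ∈ D.verts) :
    D.reachSet s = cReach E D.verts s := by
  ext v
  simp only [reachSet, Finset.mem_filter]
  constructor
  · rintro ⟨hv, hr⟩
    -- completeness: by induction on ReflTransGen, v ∈ some iterate, hence in the fixed point
    clear hv
    induction hr with
    | refl =>
      have : s ∈ ({s} : Finset ℕ) := Finset.mem_singleton_self s
      exact iter_mono E D.verts {s} (Nat.zero_le _) this
    | @tail b c hab hbc ih =>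
      have hb : b ∈ cReach E D.verts s := ih
      have : c ∈ cStep E D.verts (cReach E D.verts s) := by
        unfold cStep
        refine Finset.mem_union_right _ (Finset.mem_filter.mpr ⟨(D.adj_mem b c hbc).2, ⟨b, hb, (hE b c).mp hbc⟩⟩)
      rwa [cReach_fixed E hs] at this
  · intro hv
    -- soundness
    have main : ∀ n (v : ℕ), v ∈ (cStep E D.verts)^[n] ({s} : Finset ℕ) →
        v ∈ D.verts ∧ Relation.ReflTransGen D.Adj s v := by
      intro n
      induction n with
      | zero => intro v hvv; simp at hvv; subst hvv; exact ⟨hs, Relation.ReflTransGen.refl⟩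
      | succ n ih =>
        intro v hvv
        rw [Function.iterate_succ_apply'] at hvv
        rcases Finset.mem_union.mp hvv with h | h
        · exact ih v h
        · obtain ⟨hvV, u, hu, hedge⟩ := Finset.mem_filter.mp h
          obtain ⟨huV, hru⟩ := ih u hu
          exact ⟨hvV, hru.tail ((hE u v).mpr hedge)⟩
    exact main _ v hv

def cIsFragment (E : Finset (ℕ × ℕ)) (V : Finset ℕ) (R : Finset ℕ) : Prop :=
  (∃ s ∈ V, R = cReach E V s) ∧ ∀ s ∈ V, R ⊆ cReach E V s → R = cReach E V s

instance (E V R) : Decidable (cIsFragment E V R) := by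
  unfold cIsFragment; infer_instance

def cFragments (E : Finset (ℕ × ℕ)) (V : Finset ℕ) : Finset (Finset ℕ) :=
  V.powerset.filter (fun R => cIsFragment E V R)

def cInduce (E : Finset (ℕ × ℕ)) (S : Finset ℕ) : Finset (ℕ × ℕ) :=
  E.filter (fun p => p.1 ∈ S ∧ p.2 ∈ S)

def cDdpAux : ℕ → Finset (ℕ × ℕ) → Finset ℕ → ℕ
  | 0, _, _ => 0
  | n+1, E, V =>
    if hcard : V.card ≤ 1 then 1
    else if (cFragments E V).card = 1 then
      1 + V.inf' (Finset.card_pos.mp (by omega)) fun v =>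
        cDdpAux n (cInduce E (V.erase v)) (V ∩ V.erase v)
    else
      (cFragments E V).sup fun R => cDdpAux n (cInduce E R) (V ∩ R)

lemma fragments_eq (D : FinDigraph ℕ) (E : Finset (ℕ × ℕ))
    (hE : ∀ u v, D.Adj u v ↔ (u, v) ∈ E) :
    D.fragments = cFragments E D.verts := by
  unfold fragments cFragments
  apply Finset.filter_congr
  intro R _
  have hre : ∀ s ∈ D.verts, D.reachSet s = cReach E D.verts s := fun s hs => cReach_spec D E hE hs
  constructor
  · rintro ⟨⟨s, hs, hRs⟩, hmax⟩
    refine ⟨⟨s, hs, by rw [← hre s hs]; exact hRs⟩, ?_⟩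
    intro t ht hsub
    rw [← hre t ht] at hsub ⊢
    exact hmax t ht hsub
  · rintro ⟨⟨s, hs, hRs⟩, hmax⟩
    refine ⟨⟨s, hs, by rw [hre s hs]; exact hRs⟩, ?_⟩
    intro t ht hsub
    rw [hre t ht] at hsub ⊢
    exact hmax t ht hsub

lemma induce_verts (D : FinDigraph ℕ) (S : Finset ℕ) : (D.induce S).verts = D.verts ∩ S := by
  ext x
  simp [induce]

lemma erase_irrel (inst : DecidableEq ℕ) (V : Finset ℕ) (v : ℕ) :
    @Finset.erase ℕ inst V v = @Finset.erase ℕ instDecidableEqNat V v := by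
  ext x; simp

lemma deleteVert_eq (D : FinDigraph ℕ) (v : ℕ) :
    D.deleteVert v = D.induce (D.verts.erase v) := by
  unfold deleteVert
  congr 1
  exact erase_irrel (fun a b => Classical.propDecidable (a = b)) D.verts v

lemma induce_adj_iff (D : FinDigraph ℕ) (E : Finset (ℕ × ℕ))
    (hE : ∀ u v, D.Adj u v ↔ (u, v) ∈ E) (S : Finset ℕ) :
    ∀ u v, (D.induce S).Adj u v ↔ (u, v) ∈ cInduce E S := by
  intro u v
  simp only [induce, cInduce, Finset.mem_filter, ← hE u v]

lemma ddpAux_eq : ∀ (n : ℕ) (D : FinDigraph ℕ) (E : Finset (ℕ × ℕ)),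
    (∀ u v, D.Adj u v ↔ (u, v) ∈ E) → ddpAux n D = cDdpAux n E D.verts := by
  intro n
  induction n with
  | zero => intro D E hE; rfl
  | succ n ih =>
    intro D E hE
    rw [ddpAux, cDdpAux]
    have hfrag := fragments_eq D E hE
    by_cases hcard : D.verts.card ≤ 1
    · rw [dif_pos hcard, dif_pos hcard]
    · rw [dif_neg hcard, dif_neg hcard, hfrag]
      by_cases h1 : (cFragments E D.verts).card = 1
      · rw [if_pos h1, if_pos h1]
        congr 1
        apply Finset.inf'_congr _ rfl
        intro v _
        rw [deleteVert_eq D v,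
          ih (D.induce (D.verts.erase v)) (cInduce E (D.verts.erase v))
            (induce_adj_iff D E hE (D.verts.erase v)),
          induce_verts]
      · rw [if_neg h1, if_neg h1]
        apply Finset.sup_congr rfl
        intro R _
        have := ih (D.induce R) (cInduce E R) (induce_adj_iff D E hE R)
        rw [this]
        rw [induce_verts]

lemma exampleH_adj_iff : ∀ u v, exampleH.Adj u v ↔
    (u, v) ∈ ({(0, 2), (1, 2), (2, 3), (3, 2), (4, 3), (5, 3)} : Finset (ℕ × ℕ)) :=
  fun _ _ => Iff.rfl

theorem ddp_exampleH : ddp exampleH = 2 := by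
  have h : ddp exampleH = cDdpAux exampleH.verts.card
      ({(0, 2), (1, 2), (2, 3), (3, 2), (4, 3), (5, 3)} : Finset (ℕ × ℕ)) exampleH.verts :=
    ddpAux_eq _ exampleH _ exampleH_adj_iff
  rw [h]
  decide

end FinDigraph

namespace FinDigraph

variable {β : Type} {P : FinDigraph β}

lemma mem_verts_of_chain {x b : β} {l : List β} (h : List.Chain P.Adj x (b :: l)) :
    ∀ a ∈ x :: b :: l, a ∈ P.verts := by
  have hx : x ∈ P.verts := (P.adj_mem _ _ (List.chain_cons.mp h).1).1
  intro a ha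
  rcases List.mem_cons.mp ha with rfl | ha
  · exact hx
  · exact List.IsChain.cons_induction (· ∈ P.verts) _ h
      (fun u v huv _ => (P.adj_mem u v huv).2) hx a ha

lemma depth_bddAbove (hdag : P.IsDag) :
    ∀ n ∈ {n : ℕ | ∃ l : List β, l.Chain' P.Adj ∧ (∀ x ∈ l, x ∈ P.verts) ∧ l.length = n},
      n ≤ P.verts.card := by
  rintro n ⟨l, hch, hmem, rfl⟩
  haveI : IsTrans β (Relation.TransGen P.Adj) := ⟨fun _ _ _ => Relation.TransGen.trans⟩
  have hch' : l.Chain' (Relation.TransGen P.Adj) :=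
    List.IsChain.imp (fun _ _ h => Relation.TransGen.single h) hch
  have hpw : l.Pairwise (Relation.TransGen P.Adj) := List.isChain_iff_pairwise.mp hch'
  have hnd : l.Nodup := hpw.imp (fun {a b} h => by
    intro he
    subst he
    exact hdag a h)
  have h1 : l.toFinset.card = l.length := List.toFinset_card_of_nodup hnd
  have h2 : l.toFinset ⊆ P.verts := fun x hx => hmem x (List.mem_toFinset.mp hx)
  rw [← h1]
  exact Finset.card_le_card h2

lemma depth_ge_of_chain (hdag : P.IsDag) {L : List β} (hch : L.Chain' P.Adj)
    (hmem : ∀ a ∈ L, a ∈ P.verts) (hlen : 3 ≤ L.length) : 3 ≤ P.depth := by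
  apply le_csSup ⟨P.verts.card, fun n hn => depth_bddAbove hdag n hn⟩
  refine ⟨L.take 3, hch.take 3, fun x hx => hmem x (List.mem_of_mem_take hx), ?_⟩
  rw [List.length_take]
  omega

lemma depth_ge_three (hdag : P.IsDag) {x y z : β}
    (h1 : Relation.TransGen P.Adj x y) (h2 : Relation.TransGen P.Adj y z) : 3 ≤ P.depth := by
  have hxy : x ≠ y := fun h => hdag x (h ▸ h1)
  have hyz : y ≠ z := fun h => hdag y (h ▸ h2)
  obtain ⟨l1, hc1, hl1⟩ := List.exists_isChain_cons_of_relationReflTransGen h1.to_reflTransGen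
  obtain ⟨l2, hc2, hl2⟩ := List.exists_isChain_cons_of_relationReflTransGen h2.to_reflTransGen
  cases l1 with
  | nil => exact absurd hl1 hxy
  | cons b t1 =>
  cases l2 with
  | nil => exact absurd hl2 hyz
  | cons m t2 =>
    have hylast : (x :: b :: t1).getLast (List.cons_ne_nil _ _) = y := hl1
    have hym : P.Adj y m := by
      have := (List.chain_cons.mp hc2).1
      exact this
    refine depth_ge_of_chain hdag (L := (x :: b :: t1) ++ (m :: t2)) ?_ ?_ ?_
    · apply List.IsChain.append (show List.Chain' P.Adj (x :: b :: t1) from hc1)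
        (show List.Chain' P.Adj (y :: m :: t2) from hc2).tail
      intro a ha b' hb'
      have ha' : a = y := by
        rw [List.getLast?_eq_getLast (List.cons_ne_nil _ _), hylast] at ha
        exact (Option.some.inj ha).symm ▸ rfl
      have hb'' : b' = m := by simp at hb'; exact hb'.symm
      rw [ha', hb'']
      exact hym
    · intro a ha
      rcases List.mem_append.mp ha with h | h
      · exact mem_verts_of_chain hc1 a h
      · exact mem_verts_of_chain hc2 a (List.mem_cons_of_mem _ h)
    · simp only [List.length_append, List.length_cons]
      omega

lemma rootPath_single {v : β} (hv : v ∈ P.verts) (hroot : ∀ u, ¬ P.Adj u v) :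
    P.IsRootPath [v] v :=
  ⟨by simp, List.isChain_singleton v, by simpa using hv, ⟨v, rfl, hv, hroot⟩, rfl⟩

lemma exists_rootPath (hdag : P.IsDag) {v : β} (hv : v ∈ P.verts) :
    ∃ l, P.IsRootPath l v := by
  suffices h : ∀ n (v : β), v ∈ P.verts →
      (P.verts.filter (fun u => Relation.TransGen P.Adj u v)).card ≤ n →
      ∃ l, P.IsRootPath l v from h _ v hv le_rfl
  intro n
  induction n with
  | zero =>
    intro v hv hcard
    refine ⟨[v], rootPath_single hv fun u hu => ?_⟩
    have : u ∈ P.verts.filter (fun w => Relation.TransGen P.Adj w v) :=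
      Finset.mem_filter.mpr ⟨(P.adj_mem _ _ hu).1, Relation.TransGen.single hu⟩
    have := Finset.card_pos.mpr ⟨u, this⟩
    omega
  | succ n ih =>
    intro v hv hcard
    by_cases hroot : ∀ u, ¬ P.Adj u v
    · exact ⟨[v], rootPath_single hv hroot⟩
    · push_neg at hroot
      obtain ⟨u, hu⟩ := hroot
      have huv : u ∈ P.verts := (P.adj_mem _ _ hu).1
      have humem : u ∈ P.verts.filter (fun w => Relation.TransGen P.Adj w v) :=
        Finset.mem_filter.mpr ⟨huv, Relation.TransGen.single hu⟩
      have hsub : P.verts.filter (fun w => Relation.TransGen P.Adj w u) ⊆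
          (P.verts.filter (fun w => Relation.TransGen P.Adj w v)).erase u := by
        intro w hw
        obtain ⟨hw1, hw2⟩ := Finset.mem_filter.mp hw
        refine Finset.mem_erase.mpr ⟨fun he => hdag u (he ▸ hw2), Finset.mem_filter.mpr ⟨hw1, hw2.tail hu⟩⟩
      have hcard' : (P.verts.filter (fun w => Relation.TransGen P.Adj w u)).card ≤ n := by
        have h1 := Finset.card_le_card hsub
        rw [Finset.card_erase_of_mem humem] at h1
        omega
      obtain ⟨l, hne, hch, hmem, ⟨r, hr1, hr2⟩, hlast⟩ := ih u huv hcard'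
      refine ⟨l ++ [v], by simp, ?_, ?_, ⟨r, ?_, hr2⟩, List.getLast?_concat⟩
      · apply List.IsChain.append hch (List.isChain_singleton v)
        intro a ha b hb
        rw [hlast] at ha
        have : a = u := by simp at ha; exact ha.symm
        have hb' : b = v := by simp at hb; exact hb.symm
        rw [this, hb']
        exact hu
      · intro x hx
        rcases List.mem_append.mp hx with h | h
        · exact hmem x h
        · simp at h; rw [h]; exact hv
      · rw [List.head?_append, hr1]; rfl

lemma rootPath_split {l : List β} {v x : β} (hl : P.IsRootPath l v) (hx : x ∈ l)
    (hxv : x ≠ v) : Relation.TransGen P.Adj x v := by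
  obtain ⟨hne, hch, hmem, ⟨r, hr1, hr2⟩, hlast⟩ := hl
  obtain ⟨l1, l2, rfl⟩ := List.append_of_mem hx
  have hl2 : l2 ≠ [] := by
    rintro rfl
    rw [List.getLast?_concat] at hlast
    exact hxv (Option.some.inj hlast)
  have hch2 : List.Chain' P.Adj (x :: l2) := hch.suffix (List.suffix_append l1 (x :: l2))
  have hlast2 : (x :: l2).getLast (List.cons_ne_nil _ _) = v := by
    rw [List.getLast?_append] at hlast
    rw [List.getLast?_eq_getLast (l := x :: l2) (List.cons_ne_nil _ _)] at hlast
    exact Option.some.inj (by simpa using hlast)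
  have hrtg : Relation.ReflTransGen P.Adj x v :=
    List.relationReflTransGen_of_exists_isChain_cons l2 hch2 hlast2
  rcases Relation.reflTransGen_iff_eq_or_transGen.mp hrtg with h | h
  · exact absurd h.symm hxv
  · exact h

lemma rootPath_split_depth (hdag : P.IsDag) {l : List β} {v x : β} (hl : P.IsRootPath l v)
    (hx : x ∈ l) (hxv : x ≠ v) (hnr : ¬ P.IsRoot x) : 3 ≤ P.depth := by
  have htxv : Relation.TransGen P.Adj x v := rootPath_split hl hx hxv
  obtain ⟨hne, hch, hmem, ⟨r, hr1, hr2⟩, hlast⟩ := hl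
  obtain ⟨l1, l2, rfl⟩ := List.append_of_mem hx
  cases l1 with
  | nil =>
    simp only [List.nil_append, List.head?_cons] at hr1
    exact absurd ((Option.some.inj hr1) ▸ hr2) hnr
  | cons c t =>
    have hcr : c = r := by simpa using hr1
    have hrootc : P.IsRoot c := hcr ▸ hr2
    have hpre : List.Chain' P.Adj ((c :: t) ++ [x]) := by
      apply hch.prefix
      exact ⟨l2, by simp⟩
    have hlastx : ((c :: t) ++ [x]).getLast (by simp) = x := by
      have := List.getLast?_concat (a := x) (l := c :: t)
      rw [List.getLast?_eq_getLast (by simp : (c :: t) ++ [x] ≠ [])] at this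
      exact Option.some.inj this
    have hchain : List.Chain P.Adj c (t ++ [x]) := hpre
    have hrtg : Relation.ReflTransGen P.Adj c x :=
      List.relationReflTransGen_of_exists_isChain_cons (t ++ [x]) hchain hlastx
    have hcx : c ≠ x := fun h => hnr (h ▸ hrootc)
    have htcx : Relation.TransGen P.Adj c x := by
      rcases Relation.reflTransGen_iff_eq_or_transGen.mp hrtg with h | h
      · exact absurd h.symm hcx
      · exact h
    exact depth_ge_three hdag htcx htxv

lemma case_lemma (hdag : P.IsDag) {c d e : β} (hcv : c ∈ P.verts) (hdv : d ∈ P.verts)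
    (hev : e ∈ P.verts) (hcd : c ≠ d) (hce : c ≠ e) (hde : d ≠ e)
    (h1 : Relation.TransGen P.Adj c d)
    (h2 : ∀ l, P.IsRootPath l d → c ∈ l)
    (h3 : Relation.ReflTransGen P.Adj e d ∨ ∀ l, P.IsRootPath l e → d ∈ l) :
    3 ≤ P.depth := by
  rcases h3 with hed | hpaths
  · have hted : Relation.TransGen P.Adj e d := by
      rcases Relation.reflTransGen_iff_eq_or_transGen.mp hed with h | h
      · exact absurd h.symm (Ne.symm hde)
      · exact h
    obtain ⟨m, hem, hmd⟩ := Relation.TransGen.head'_iff.mp hted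
    by_cases hm : m = d
    · subst hm
      by_cases hroot : P.IsRoot e
      · have hrp : P.IsRootPath [e, m] m := by
          refine ⟨by simp, List.isChain_pair.mpr hem, ?_, ⟨e, rfl, hroot⟩, rfl⟩
          intro a ha
          rcases List.mem_cons.mp ha with rfl | ha
          · exact hev
          · simp at ha; rw [ha]; exact (P.adj_mem _ _ hem).2
        have := h2 _ hrp
        rcases List.mem_cons.mp this with h | h
        · exact absurd h hce
        · simp at h; exact absurd h hcd
      · have : ¬ (e ∈ P.verts ∧ ∀ u, ¬ P.Adj u e) := hroot
        push_neg at this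
        obtain ⟨u, hu⟩ := this hev
        exact depth_ge_three hdag (Relation.TransGen.single hu) hted
    · have htmd : Relation.TransGen P.Adj m d := by
        rcases Relation.reflTransGen_iff_eq_or_transGen.mp hmd with h | h
        · exact absurd h.symm hm
        · exact h
      exact depth_ge_three hdag (Relation.TransGen.single hem) htmd
  · obtain ⟨l, hl⟩ := exists_rootPath hdag hev
    have hdl := hpaths l hl
    have hdnr : ¬ P.IsRoot d := by
      obtain ⟨b, _, hbd⟩ := Relation.TransGen.tail'_iff.mp h1
      exact fun hr => hr.2 b hbd
    exact rootPath_split_depth hdag hl hdl hde hdnr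

end FinDigraph

open FinDigraph in
/-- The digraph `H` has `ddp H = 2`, yet every valid DAG-depth decomposition
`(P, org)` of `H` in which `org` is injective on `V(P)` has depth at least `3`;
hence optimal decompositions cannot always avoid repeating vertices. -/
theorem exampleH_needs_repeats :
    ddp exampleH = 2 ∧
    ∀ (β : Type) (P : FinDigraph β) (org : β → ℕ),
      IsValidDecomp exampleH P org → Set.InjOn org ↑P.verts → 3 ≤ depth P := by
  constructor
  · exact ddp_exampleH
  · intro β P org hvalid hinj
    obtain ⟨hdag, hmem, hsurj, hcover⟩ := hvalid
    obtain ⟨a', ha', hoa⟩ := hsurj 0 (by decide)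
    obtain ⟨c', hc', hoc⟩ := hsurj 2 (by decide)
    obtain ⟨d', hd', hod⟩ := hsurj 3 (by decide)
    obtain ⟨e', he', hoe⟩ := hsurj 4 (by decide)
    have uniq : ∀ x ∈ P.verts, ∀ y ∈ P.verts, org x = org y → x = y := fun x hx y hy h =>
      hinj (Finset.mem_coe.mpr hx) (Finset.mem_coe.mpr hy) h
    have hcd : c' ≠ d' := fun h => by rw [h, hod] at hoc; omega
    have hca : c' ≠ a' := fun h => by rw [h, hoa] at hoc; omega
    have hce : c' ≠ e' := fun h => by rw [h, hoe] at hoc; omega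
    have hda : d' ≠ a' := fun h => by rw [h, hoa] at hod; omega
    have hde : d' ≠ e' := fun h => by rw [h, hoe] at hod; omega
    -- neighbor-cover facts, specialized using injectivity
    have covc : Relation.TransGen P.Adj c' d' ∨ ∀ l, P.IsRootPath l c' → d' ∈ l := by
      rcases hcover c' hc' 3 (by rw [hoc]; exact (exampleH_adj_iff _ _).mpr (by decide)) with ⟨u', hu', hou, hdesc⟩ | hp
      · left
        have he : u' = d' := uniq u' hu' d' hd' (by rw [hou, hod])
        subst he
        rcases Relation.reflTransGen_iff_eq_or_transGen.mp hdesc with h | h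
        · exact absurd h.symm hcd
        · exact h
      · right
        intro l hl
        obtain ⟨u', hul, hou⟩ := hp l hl
        have hu'v : u' ∈ P.verts := hl.2.2.1 u' hul
        have he : u' = d' := uniq u' hu'v d' hd' (by rw [hou, hod])
        exact he ▸ hul
    have covd : Relation.TransGen P.Adj d' c' ∨ ∀ l, P.IsRootPath l d' → c' ∈ l := by
      rcases hcover d' hd' 2 (by rw [hod]; exact (exampleH_adj_iff _ _).mpr (by decide)) with ⟨u', hu', hou, hdesc⟩ | hp
      · left
        have he : u' = c' := uniq u' hu' c' hc' (by rw [hou, hoc])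
        subst he
        rcases Relation.reflTransGen_iff_eq_or_transGen.mp hdesc with h | h
        · exact absurd h hcd
        · exact h
      · right
        intro l hl
        obtain ⟨u', hul, hou⟩ := hp l hl
        have hu'v : u' ∈ P.verts := hl.2.2.1 u' hul
        have he : u' = c' := uniq u' hu'v c' hc' (by rw [hou, hoc])
        exact he ▸ hul
    have cove : Relation.ReflTransGen P.Adj e' d' ∨ ∀ l, P.IsRootPath l e' → d' ∈ l := by
      rcases hcover e' he' 3 (by rw [hoe]; exact (exampleH_adj_iff _ _).mpr (by decide)) with ⟨u', hu', hou, hdesc⟩ | hp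
      · left
        have he : u' = d' := uniq u' hu' d' hd' (by rw [hou, hod])
        exact he ▸ hdesc
      · right
        intro l hl
        obtain ⟨u', hul, hou⟩ := hp l hl
        have hu'v : u' ∈ P.verts := hl.2.2.1 u' hul
        have he : u' = d' := uniq u' hu'v d' hd' (by rw [hou, hod])
        exact he ▸ hul
    have cova : Relation.ReflTransGen P.Adj a' c' ∨ ∀ l, P.IsRootPath l a' → c' ∈ l := by
      rcases hcover a' ha' 2 (by rw [hoa]; exact (exampleH_adj_iff _ _).mpr (by decide)) with ⟨u', hu', hou, hdesc⟩ | hp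
      · left
        have he : u' = c' := uniq u' hu' c' hc' (by rw [hou, hoc])
        exact he ▸ hdesc
      · right
        intro l hl
        obtain ⟨u', hul, hou⟩ := hp l hl
        have hu'v : u' ∈ P.verts := hl.2.2.1 u' hul
        have he : u' = c' := uniq u' hu'v c' hc' (by rw [hou, hoc])
        exact he ▸ hul
    rcases covc with hcdTG | hcpaths
    · -- Case (i): `d'` is a strict descendant of `c'`
      have h2 : ∀ l, P.IsRootPath l d' → c' ∈ l := by
        rcases covd with hdc | hp
        · exact absurd (hcdTG.trans hdc) (hdag c')
        · exact hp
      exact case_lemma hdag hc' hd' he' hcd hce hde hcdTG h2 cove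
    · rcases covd with hdcTG | hdpaths
      · -- Case (ii): `c'` is a strict descendant of `d'`
        exact case_lemma hdag hd' hc' ha' (fun h => hcd h.symm) hda hca hdcTG hcpaths cova
      · -- Case (iii): impossible, it yields a cycle
        obtain ⟨l, hl⟩ := exists_rootPath hdag hc'
        have h1 : Relation.TransGen P.Adj d' c' :=
          rootPath_split hl (hcpaths l hl) (fun h => hcd h.symm)
        obtain ⟨l', hl'⟩ := exists_rootPath hdag hd'
        have h2 : Relation.TransGen P.Adj c' d' :=
          rootPath_split hl' (hdpaths l' hl') hcd
        exact absurd (h2.trans h1) (hdag c')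
end
end
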